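/- Let A₁ and A₂ be unital associative ℂ-algebras and let U be an irreducible A₁ ⊗ A₂-module. Suppose that U, viewed as an A₁-module via a₁ ↦ a₁ ⊗ 1, has an irreducible A₁-submodule U₁, and assume that either A₁ has countable dimension over ℂ or every A₁-module endomorphism of U₁ is a scalar multiple of the identity. Then there exists an irreducible A₂-module U₂ such that U is isomorphic, as an A₁ ⊗ A₂-module, to U₁ ⊗ U₂. -/

import Mathlib

open scoped TensorProduct

set_option maxHeartbeats 1000000
set_option synthInstance.maxHeartbeats 200000

noncomputable section
namespace Twisted

/-- `U` (with representation `ρ`) is an irreducible `A`-module. -/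
def AIrred (A : Type) [Ring A] [Algebra ℂ A] (U : Type) [AddCommGroup U] [Module ℂ U]
    (ρ : A →ₐ[ℂ] Module.End ℂ U) : Prop :=
  Nontrivial U ∧ ∀ S : Submodule ℂ U, (∀ a : A, ∀ x ∈ S, ρ a x ∈ S) → S = ⊥ ∨ S = ⊤

/-- `A` has countable dimension over `ℂ` (a countable basis). -/
def CountableDim (A : Type) [Ring A] [Algebra ℂ A] : Prop :=
  ∃ ι : Type, Countable ι ∧ Nonempty (Module.Basis ι ℂ A)

/-! ### Auxiliary lemmas -/

section Aux

variable {A₁ : Type} [Ring A₁] [Algebra ℂ A₁] {M : Type} [AddCommGroup M] [Module ℂ M]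

/-- A nonzero equivariant endomorphism of an irreducible module is bijective. -/
lemma bij_of_equivariant (ρ₁ : A₁ →ₐ[ℂ] Module.End ℂ M) (hirr : AIrred A₁ M ρ₁)
    (g : M →ₗ[ℂ] M) (hg : ∀ a x, g (ρ₁ a x) = ρ₁ a (g x)) (hg0 : g ≠ 0) :
    Function.Bijective g := by
  constructor
  · rw [← LinearMap.ker_eq_bot]
    rcases hirr.2 (LinearMap.ker g) (fun a x hx => by
      rw [LinearMap.mem_ker] at *
      rw [hg, hx, map_zero]) with h | h
    · exact h
    · exact absurd (LinearMap.ker_eq_top.mp h) hg0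
  · rw [← LinearMap.range_eq_top]
    rcases hirr.2 (LinearMap.range g) (fun a x hx => by
      obtain ⟨y, rfl⟩ := hx
      exact ⟨ρ₁ a y, hg a y⟩) with h | h
    · exact absurd (LinearMap.range_eq_bot.mp h) hg0
    · exact h

/-- Dixmier's lemma: over `ℂ`, if `A₁` has countable dimension then every equivariant
endomorphism of an irreducible `A₁`-module is a scalar. -/
lemma schur_of_countable (ρ₁ : A₁ →ₐ[ℂ] Module.End ℂ M) (hirr : AIrred A₁ M ρ₁)
    (hcd : CountableDim A₁) (g : M →ₗ[ℂ] M) (hg : ∀ a x, g (ρ₁ a x) = ρ₁ a (g x)) :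
    ∃ c : ℂ, g = c • LinearMap.id := by
  classical
  by_contra hc
  push_neg at hc
  have := hirr.1
  obtain ⟨x₀, hx₀⟩ := exists_ne (0 : M)
  -- each `g - c • id` is equivariant and nonzero, hence bijective
  set gc : ℂ → (M →ₗ[ℂ] M) := fun c => g - c • LinearMap.id with hgc
  have hsub : ∀ c : ℂ, ∀ a x, (gc c) (ρ₁ a x) = ρ₁ a ((gc c) x) := by
    intro c a x
    simp only [hgc]
    simp only [LinearMap.sub_apply, LinearMap.smul_apply, LinearMap.id_apply, map_sub, map_smul, hg]
  have hbij : ∀ c : ℂ, Function.Bijective (gc c) := fun c =>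
    bij_of_equivariant ρ₁ hirr _ (hsub c) (fun h0 => hc c (by rwa [hgc, sub_eq_zero] at h0))
  set e : ∀ c : ℂ, M ≃ₗ[ℂ] M := fun c => LinearEquiv.ofBijective _ (hbij c) with he
  set v : ℂ → M := fun c => (e c).symm x₀ with hv
  have hev : ∀ c : ℂ, (gc c) (v c) = x₀ := fun c => (e c).apply_symm_apply x₀
  -- the family v is linearly independent
  have haeval : ∀ c : ℂ, Polynomial.aeval g (Polynomial.X - Polynomial.C c) = gc c := by
    intro c
    rw [hgc, map_sub, Polynomial.aeval_X, Polynomial.aeval_C, Module.algebraMap_end_eq_smul_id]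
  have hinjm : ∀ m : Multiset ℂ,
      Function.Injective (Polynomial.aeval g ((m.map (fun r => Polynomial.X - Polynomial.C r)).prod)) := by
    intro m
    induction m using Multiset.induction_on with
    | empty => simpa [Module.End.one_eq_id] using Function.injective_id
    | cons r m ih =>
      rw [Multiset.map_cons, Multiset.prod_cons, map_mul]
      have : Function.Injective (Polynomial.aeval g (Polynomial.X - Polynomial.C r)) := by
        rw [haeval]; exact (hbij r).1
      exact fun x y hxy => ih (this hxy)
  have hli : LinearIndependent ℂ v := by
    rw [linearIndependent_iff']
    intro s lam hrel c₀ hc₀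
    by_contra hl0
    set q : Polynomial ℂ :=
      ∑ c ∈ s, Polynomial.C (lam c) * ∏ c' ∈ s.erase c, (Polynomial.X - Polynomial.C c') with hq
    have heval : Polynomial.eval c₀ q ≠ 0 := by
      rw [hq, Polynomial.eval_finset_sum, Finset.sum_eq_single c₀]
      · simp only [Polynomial.eval_mul, Polynomial.eval_C, Polynomial.eval_prod,
          Polynomial.eval_sub, Polynomial.eval_X]
        refine mul_ne_zero hl0 (Finset.prod_ne_zero_iff.mpr fun c' hc' => ?_)
        exact sub_ne_zero.mpr (Ne.symm (Finset.ne_of_mem_erase hc'))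
      · intro c hcs hcne
        simp only [Polynomial.eval_mul, Polynomial.eval_C, Polynomial.eval_prod,
          Polynomial.eval_sub, Polynomial.eval_X]
        refine mul_eq_zero_of_right _ (Finset.prod_eq_zero (Finset.mem_erase.mpr ⟨Ne.symm hcne, hc₀⟩) ?_)
        simp
      · intro h; exact absurd hc₀ h
    have hq0 : q ≠ 0 := fun h => heval (by simp [h])
    have hker : (Polynomial.aeval g q) x₀ = 0 := by
      have hterm : ∀ c ∈ s,
          (Polynomial.aeval g (∏ c' ∈ s.erase c, (Polynomial.X - Polynomial.C c'))) x₀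
            = (Polynomial.aeval g (∏ c' ∈ s, (Polynomial.X - Polynomial.C c'))) (v c) := by
        intro c hcs
        rw [← Finset.prod_erase_mul s _ hcs, map_mul, Module.End.mul_apply, haeval, hev]
      have : (Polynomial.aeval g q) x₀
          = (Polynomial.aeval g (∏ c' ∈ s, (Polynomial.X - Polynomial.C c')))
              (∑ c ∈ s, lam c • v c) := by
        rw [hq, map_sum, LinearMap.sum_apply, map_sum]
        refine Finset.sum_congr rfl fun c hcs => ?_
        rw [map_mul, Module.End.mul_apply, Polynomial.aeval_C, Module.algebraMap_end_apply,
          hterm c hcs, map_smul]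
      rw [this, hrel, map_zero]
    -- factor q into linear factors; each is injective on M, so x₀ = 0
    have hsplit := Polynomial.Splits.eq_prod_roots (IsAlgClosed.splits q)
    have hinj : Function.Injective (Polynomial.aeval g q) := by
      rw [hsplit, map_mul, Polynomial.aeval_C]
      intro x y hxy
      simp only [Module.End.mul_apply, Module.algebraMap_end_apply] at hxy
      have hlc : q.leadingCoeff ≠ 0 := Polynomial.leadingCoeff_ne_zero.mpr hq0
      exact hinjm q.roots (smul_right_injective M hlc hxy)
    exact hx₀ (hinj (by rw [hker, map_zero]))
  -- cardinality contradiction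
  obtain ⟨ι, hcount, ⟨b⟩⟩ := hcd
  set T : A₁ →ₗ[ℂ] M := (LinearMap.applyₗ x₀).comp ρ₁.toLinearMap with hTdef
  have hTa : ∀ a : A₁, T a = ρ₁ a x₀ := fun a => rfl
  have hT : Function.Surjective T := by
    rw [← LinearMap.range_eq_top]
    rcases hirr.2 (LinearMap.range T) (fun a x hx => by
      obtain ⟨y, rfl⟩ := hx
      exact ⟨a * y, by rw [hTa, hTa, map_mul]; rfl⟩) with h | h
    · exfalso
      have : x₀ ∈ LinearMap.range T := ⟨1, by rw [hTa, map_one]; rfl⟩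
      rw [h] at this
      exact hx₀ (by simpa using this)
    · exact h
  have h1 : (Cardinal.mk ℂ) ≤ Module.rank ℂ M := hli.cardinal_le_rank
  have h2 : Module.rank ℂ M ≤ Module.rank ℂ A₁ := LinearMap.rank_le_of_surjective T hT
  have h3 : Module.rank ℂ A₁ = Cardinal.mk ι := b.mk_eq_rank''.symm
  have h4 : Cardinal.mk ι ≤ Cardinal.aleph0 := Cardinal.mk_le_aleph0
  have : Cardinal.continuum ≤ Cardinal.aleph0 := by
    rw [← Cardinal.mk_complex]
    exact h1.trans (h2.trans (h3.le.trans h4))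
  exact absurd this (not_le.mpr Cardinal.aleph0_lt_continuum)

end Aux

/-! ### The density-type lemma -/

/-- If `f i` (`i ∈ s`) are equivariant maps `M → Uu` that are linearly independent,
then the joint evaluation map is injective. -/
lemma core {A₁ : Type} [Ring A₁] [Algebra ℂ A₁] {M : Type} [AddCommGroup M] [Module ℂ M]
    {Uu : Type} [AddCommGroup Uu] [Module ℂ Uu] {ι : Type}
    (ρ₁ : A₁ →ₐ[ℂ] Module.End ℂ M) (σ : A₁ → Module.End ℂ Uu)
    (hirr : AIrred A₁ M ρ₁)
    (schur : ∀ g : M →ₗ[ℂ] M, (∀ a x, g (ρ₁ a x) = ρ₁ a (g x)) → ∃ c : ℂ, g = c • LinearMap.id)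
    (f : ι → (M →ₗ[ℂ] Uu))
    (hequi : ∀ i a x, f i (ρ₁ a x) = σ a (f i x))
    (s : Finset ι) :
    ∀ (_ : ∀ lam : ι → ℂ, (∑ i ∈ s, lam i • f i) = 0 → ∀ i ∈ s, lam i = 0)
      (x : ι → M), (∑ i ∈ s, f i (x i)) = 0 → ∀ i ∈ s, x i = 0 := by
  classical
  induction s using Finset.induction_on with
  | empty => intro _ x _ i hi; exact absurd hi (Finset.notMem_empty i)
  | @insert a s hnotmem ih =>
    intro hind x hsum
    -- independence over the smaller set
    have hinds : ∀ lam : ι → ℂ, (∑ i ∈ s, lam i • f i) = 0 → ∀ i ∈ s, lam i = 0 := by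
      intro lam hlam i hi
      have h2 : (∑ j ∈ insert a s, Function.update lam a 0 j • f j) = 0 := by
        rw [Finset.sum_insert hnotmem, Function.update_self, zero_smul, zero_add, ← hlam]
        refine Finset.sum_congr rfl fun j hj => ?_
        rw [Function.update_of_ne (show j ≠ a from fun h => hnotmem (h ▸ hj))]
      have := hind _ h2 i (Finset.mem_insert_of_mem hi)
      rwa [Function.update_of_ne (show i ≠ a from fun h => hnotmem (h ▸ hi))] at this
    rw [Finset.sum_insert hnotmem] at hsum
    -- the invariant submodule W
    set G : (M × (ι → M)) →ₗ[ℂ] Uu :=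
      (f a).comp (LinearMap.fst ℂ M (ι → M)) +
        ∑ i ∈ s, (f i).comp ((LinearMap.proj i).comp (LinearMap.snd ℂ M (ι → M))) with hG
    have hGapp : ∀ (y : M) (z : ι → M), G (y, z) = f a y + ∑ i ∈ s, f i (z i) := by
      intro y z
      simp [hG, LinearMap.sum_apply]
    set W : Submodule ℂ M := (LinearMap.ker G).map (LinearMap.fst ℂ M (ι → M)) with hWdef
    have memW : ∀ y : M, y ∈ W ↔ ∃ z : ι → M, f a y + ∑ i ∈ s, f i (z i) = 0 := by
      intro y
      constructor
      · rintro ⟨⟨y', z⟩, hker, rfl⟩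
        exact ⟨z, by rw [← hGapp]; exact hker⟩
      · rintro ⟨z, hz⟩
        exact ⟨(y, z), LinearMap.mem_ker.mpr (by rw [hGapp]; exact hz), rfl⟩
    have hWinv : ∀ a' : A₁, ∀ y ∈ W, ρ₁ a' y ∈ W := by
      intro a' y hy
      obtain ⟨z, hz⟩ := (memW y).mp hy
      refine (memW _).mpr ⟨fun i => ρ₁ a' (z i), ?_⟩
      have : f a (ρ₁ a' y) + ∑ i ∈ s, f i (ρ₁ a' (z i)) = σ a' (f a y + ∑ i ∈ s, f i (z i)) := by
        rw [map_add, hequi, map_sum]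
        exact congrArg _ (Finset.sum_congr rfl fun i _ => hequi i a' (z i))
      rw [this, hz, map_zero]
    have hxa : x a = 0 ∧ (∑ i ∈ s, f i (x i)) = 0 := by
      rcases hirr.2 W hWinv with hbot | htop
      · have : x a ∈ W := (memW _).mpr ⟨x, hsum⟩
        rw [hbot, Submodule.mem_bot] at this
        refine ⟨this, ?_⟩
        rw [this, map_zero, zero_add] at hsum
        exact hsum
      · exfalso
        have huniq : ∀ z z' : ι → M,
            (∑ i ∈ s, f i (z i)) = (∑ i ∈ s, f i (z' i)) → ∀ i ∈ s, z i = z' i := by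
          intro z z' hzz i hi
          have hzz' : (∑ i ∈ s, f i ((z - z') i)) = 0 := by
            have : ∀ j ∈ s, f j ((z - z') j) = f j (z j) - f j (z' j) := fun j _ => by
              simp [map_sub]
            rw [Finset.sum_congr rfl this, Finset.sum_sub_distrib, hzz, sub_self]
          have := ih hinds (z - z') hzz' i hi
          simpa [sub_eq_zero] using this
        have hWall : ∀ y : M, ∃ z : ι → M, f a y + ∑ i ∈ s, f i (z i) = 0 := fun y =>
          (memW y).mp (htop ▸ Submodule.mem_top)
        choose zf hzf using hWall
        have hS : ∀ y : M, (∑ i ∈ s, f i (zf y i)) = -(f a y) := fun y =>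
          eq_neg_of_add_eq_zero_right (hzf y)
        have hadd : ∀ i ∈ s, ∀ y y' : M, zf (y + y') i = zf y i + zf y' i := by
          intro i hi y y'
          refine huniq _ (fun j => zf y j + zf y' j) ?_ i hi
          have h1 : (∑ j ∈ s, f j ((fun j => zf y j + zf y' j) j)) = -(f a y) + -(f a y') := by
            rw [← hS y, ← hS y', ← Finset.sum_add_distrib]
            exact Finset.sum_congr rfl (fun j _ => by simp [map_add])
          rw [hS (y + y'), h1, map_add, neg_add]
        have hsmul : ∀ i ∈ s, ∀ (c : ℂ) (y : M), zf (c • y) i = c • zf y i := by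
          intro i hi c y
          refine huniq _ (fun j => c • zf y j) ?_ i hi
          have h1 : (∑ j ∈ s, f j ((fun j => c • zf y j) j)) = c • -(f a y) := by
            rw [← hS y, Finset.smul_sum]
            exact Finset.sum_congr rfl (fun j _ => by simp [map_smul])
          rw [hS (c • y), h1, map_smul, smul_neg]
        have hequiv : ∀ i ∈ s, ∀ (a' : A₁) (y : M), zf (ρ₁ a' y) i = ρ₁ a' (zf y i) := by
          intro i hi a' y
          refine huniq _ (fun j => ρ₁ a' (zf y j)) ?_ i hi
          have h1 : (∑ j ∈ s, f j ((fun j => ρ₁ a' (zf y j)) j)) = σ a' (-(f a y)) := by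
            rw [← hS y, map_sum]
            exact Finset.sum_congr rfl (fun j _ => by simp [hequi])
          rw [hS (ρ₁ a' y), h1, hequi, map_neg]
        have hccex : ∀ i : ι, ∃ c : ℂ, i ∈ s → ∀ y : M, zf y i = c • y := by
          intro i
          by_cases hi : i ∈ s
          · obtain ⟨c, hc⟩ := schur
              { toFun := fun y => zf y i
                map_add' := fun y y' => hadd i hi y y'
                map_smul' := fun c y => hsmul i hi c y }
              (fun a' y => hequiv i hi a' y)
            refine ⟨c, fun _ y => ?_⟩
            have := LinearMap.ext_iff.mp hc y
            simpa using this
          · exact ⟨0, fun h => absurd h hi⟩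
        choose cc hcc using hccex
        have hz : (∑ j ∈ insert a s, Function.update cc a 1 j • f j) = 0 := by
          rw [Finset.sum_insert hnotmem, Function.update_self, one_smul]
          apply LinearMap.ext; intro y
          simp only [LinearMap.add_apply, LinearMap.sum_apply, LinearMap.smul_apply,
            LinearMap.zero_apply]
          have hsc : ∀ j ∈ s, Function.update cc a 1 j • f j y = f j (zf y j) := by
            intro j hj
            rw [Function.update_of_ne (show j ≠ a from fun h => hnotmem (h ▸ hj)), ← map_smul,
              ← hcc j hj y]
          rw [Finset.sum_congr rfl hsc, hS y]
          simp
        have := hind _ hz a (Finset.mem_insert_self a s)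
        rw [Function.update_self] at this
        exact one_ne_zero this
    refine fun i hi => ?_
    rcases Finset.mem_insert.mp hi with rfl | hi'
    · exact hxa.1
    · exact ih hinds x hxa.2 i hi'



/-! ### Constructions -/

section Constr

variable {A₁ A₂ : Type} [Ring A₁] [Algebra ℂ A₁] [Ring A₂] [Algebra ℂ A₂]
  {U : Type} [AddCommGroup U] [Module ℂ U]
  (ρ : A₁ ⊗[ℂ] A₂ →ₐ[ℂ] Module.End ℂ U) (U₁ : Submodule ℂ U)
  (ρ₁' : A₁ →ₐ[ℂ] Module.End ℂ ↥U₁)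

/-- The space of `A₁`-equivariant maps `U₁ → U`. -/
def Hsub : Submodule ℂ (↥U₁ →ₗ[ℂ] U) where
  carrier := {f | ∀ (a : A₁) (x : ↥U₁), f (ρ₁' a x) = ρ (a ⊗ₜ[ℂ] (1 : A₂)) (f x)}
  add_mem' := fun hf hg a x => by
    simp only [LinearMap.add_apply, hf a x, hg a x, map_add]
  zero_mem' := fun a x => by simp
  smul_mem' := fun c f hf a x => by
    simp only [LinearMap.smul_apply, hf a x, map_smul]

lemma mem_Hsub {f : ↥U₁ →ₗ[ℂ] U} :
    f ∈ Hsub ρ U₁ ρ₁' ↔ ∀ (a : A₁) (x : ↥U₁), f (ρ₁' a x) = ρ (a ⊗ₜ[ℂ] (1 : A₂)) (f x) :=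
  Iff.rfl

lemma comm_lemma (a₁ : A₁) (a₂ : A₂) :
    ρ ((1 : A₁) ⊗ₜ[ℂ] a₂) * ρ (a₁ ⊗ₜ[ℂ] (1 : A₂)) = ρ (a₁ ⊗ₜ[ℂ] a₂) := by
  rw [← map_mul, Algebra.TensorProduct.tmul_mul_tmul, one_mul, mul_one]

lemma comm_lemma' (a₁ : A₁) (a₂ : A₂) :
    ρ (a₁ ⊗ₜ[ℂ] (1 : A₂)) * ρ ((1 : A₁) ⊗ₜ[ℂ] a₂) = ρ (a₁ ⊗ₜ[ℂ] a₂) := by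
  rw [← map_mul, Algebra.TensorProduct.tmul_mul_tmul, one_mul, mul_one]

/-- The action of `a₂ ∈ A₂` on `Hsub`. -/
def rho₂Aux (a₂ : A₂) : Module.End ℂ ↥(Hsub ρ U₁ ρ₁') where
  toFun f := ⟨(ρ ((1 : A₁) ⊗ₜ[ℂ] a₂)) ∘ₗ (f : ↥U₁ →ₗ[ℂ] U), by
    intro a x
    have hf := f.2 a x
    simp only [LinearMap.comp_apply]
    rw [hf, ← Module.End.mul_apply, comm_lemma, ← comm_lemma', Module.End.mul_apply]⟩
  map_add' f g := by apply Subtype.ext; ext x; simp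
  map_smul' c f := by apply Subtype.ext; ext x; simp

/-- The representation of `A₂` on `Hsub`. -/
def rho₂ : A₂ →ₐ[ℂ] Module.End ℂ ↥(Hsub ρ U₁ ρ₁') :=
  AlgHom.ofLinearMap
    { toFun := rho₂Aux ρ U₁ ρ₁'
      map_add' := fun a b => by
        apply LinearMap.ext; intro f; apply Subtype.ext; ext x
        simp [rho₂Aux, TensorProduct.tmul_add]
      map_smul' := fun c a => by
        apply LinearMap.ext; intro f; apply Subtype.ext; ext x
        simp [rho₂Aux, TensorProduct.tmul_smul] }
    (by
      apply LinearMap.ext; intro f; apply Subtype.ext; ext x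
      simp [rho₂Aux, ← Algebra.TensorProduct.one_def])
    (fun a b => by
      apply LinearMap.ext; intro f; apply Subtype.ext; apply LinearMap.ext; intro x
      have h : (1 : A₁) ⊗ₜ[ℂ] (a * b) = ((1 : A₁) ⊗ₜ[ℂ] a) * ((1 : A₁) ⊗ₜ[ℂ] b) := by
        rw [Algebra.TensorProduct.tmul_mul_tmul, one_mul]
      show ρ ((1 : A₁) ⊗ₜ[ℂ] (a * b)) ((f : ↥U₁ →ₗ[ℂ] U) x)
          = ρ ((1 : A₁) ⊗ₜ[ℂ] a) (ρ ((1 : A₁) ⊗ₜ[ℂ] b) ((f : ↥U₁ →ₗ[ℂ] U) x))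
      rw [h, map_mul, Module.End.mul_apply])

lemma rho₂_apply (a₂ : A₂) (f : ↥(Hsub ρ U₁ ρ₁')) :
    ((rho₂ ρ U₁ ρ₁' a₂ f : ↥(Hsub ρ U₁ ρ₁')) : ↥U₁ →ₗ[ℂ] U)
      = (ρ ((1 : A₁) ⊗ₜ[ℂ] a₂)) ∘ₗ (f : ↥U₁ →ₗ[ℂ] U) := rfl

/-- The evaluation map `U₁ ⊗ Hsub → U`. -/
def evalE : (↥U₁ ⊗[ℂ] ↥(Hsub ρ U₁ ρ₁')) →ₗ[ℂ] U :=
  TensorProduct.lift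
    { toFun := fun x =>
        { toFun := fun f => (f : ↥U₁ →ₗ[ℂ] U) x
          map_add' := fun f g => rfl
          map_smul' := fun c f => rfl }
      map_add' := fun x y => by ext f; simp
      map_smul' := fun c x => by ext f; simp }

lemma evalE_tmul (x : ↥U₁) (f : ↥(Hsub ρ U₁ ρ₁')) :
    evalE ρ U₁ ρ₁' (x ⊗ₜ[ℂ] f) = (f : ↥U₁ →ₗ[ℂ] U) x := rfl

/-- The representation of `A₁ ⊗ A₂` on `U₁ ⊗ Hsub`. -/
def rhoT : A₁ ⊗[ℂ] A₂ →ₐ[ℂ] Module.End ℂ (↥U₁ ⊗[ℂ] ↥(Hsub ρ U₁ ρ₁')) :=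
  (Module.endTensorEndAlgHom (R := ℂ) (S := ℂ) (A := ℂ)
    (M := ↥U₁) (N := ↥(Hsub ρ U₁ ρ₁'))).comp
    (Algebra.TensorProduct.map ρ₁' (rho₂ ρ U₁ ρ₁'))

lemma rhoT_tmul (a₁ : A₁) (a₂ : A₂) :
    rhoT ρ U₁ ρ₁' (a₁ ⊗ₜ[ℂ] a₂) = TensorProduct.map (ρ₁' a₁) (rho₂ ρ U₁ ρ₁' a₂) := by
  apply TensorProduct.ext'
  intro x f
  rfl

end Constr

/-- If `U` is an irreducible `A₁ ⊗ A₂`-module which, as an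
`A₁`-module (via `a₁ ↦ a₁ ⊗ 1`), has an irreducible submodule `U₁`, and either `A₁`
has countable dimension over `ℂ` or every `A₁`-endomorphism of `U₁` is a scalar, then
`U ≅ U₁ ⊗ U₂` as `A₁ ⊗ A₂`-modules for some irreducible `A₂`-module `U₂`. -/
theorem statement11
    (A₁ A₂ : Type) [Ring A₁] [Algebra ℂ A₁] [Ring A₂] [Algebra ℂ A₂]
    (U : Type) [AddCommGroup U] [Module ℂ U]
    (ρ : A₁ ⊗[ℂ] A₂ →ₐ[ℂ] Module.End ℂ U)
    (hirr : AIrred (A₁ ⊗[ℂ] A₂) U ρ)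
    (U₁ : Submodule ℂ U)
    (hinv : ∀ a₁ : A₁, ∀ x ∈ U₁, ρ (a₁ ⊗ₜ[ℂ] (1 : A₂)) x ∈ U₁)
    (hne : U₁ ≠ ⊥)
    (hmin : ∀ S : Submodule ℂ U, S ≤ U₁ →
      (∀ a₁ : A₁, ∀ x ∈ S, ρ (a₁ ⊗ₜ[ℂ] (1 : A₂)) x ∈ S) → S = ⊥ ∨ S = U₁)
    (hyp : CountableDim A₁ ∨
      (∀ f : ↥U₁ →ₗ[ℂ] ↥U₁,
        (∀ (a₁ : A₁) (x : ↥U₁),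
          (↑(f ⟨ρ (a₁ ⊗ₜ[ℂ] (1 : A₂)) ↑x, hinv a₁ ↑x x.2⟩) : U) =
            ρ (a₁ ⊗ₜ[ℂ] (1 : A₂)) ↑(f x)) →
        ∃ c : ℂ, f = c • LinearMap.id)) :
    ∀ ρ₁' : A₁ →ₐ[ℂ] Module.End ℂ ↥U₁,
      (∀ (a₁ : A₁) (x : ↥U₁), (↑(ρ₁' a₁ x) : U) = ρ (a₁ ⊗ₜ[ℂ] (1 : A₂)) ↑x) →
      ∃ (U₂ : ModuleCat ℂ) (ρ₂ : A₂ →ₐ[ℂ] Module.End ℂ U₂),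
        AIrred A₂ U₂ ρ₂ ∧
        ∃ ρT : A₁ ⊗[ℂ] A₂ →ₐ[ℂ] Module.End ℂ (↥U₁ ⊗[ℂ] U₂),
          (∀ (a₁ : A₁) (a₂ : A₂),
            ρT (a₁ ⊗ₜ[ℂ] a₂) = TensorProduct.map (ρ₁' a₁) (ρ₂ a₂)) ∧
          ∃ Φ : U ≃ₗ[ℂ] (↥U₁ ⊗[ℂ] U₂),
            ∀ (z : A₁ ⊗[ℂ] A₂) (x : U), Φ (ρ z x) = ρT z (Φ x) := by
  intro ρ₁' compat
  classical
  obtain ⟨x₀v, hx₀mem, hx₀ne⟩ := (Submodule.ne_bot_iff U₁).mp hne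
  set x₀ : ↥U₁ := ⟨x₀v, hx₀mem⟩ with hx₀def
  have hx₀ : x₀ ≠ 0 := fun h => hx₀ne (by rw [← Submodule.coe_zero (p := U₁), ← h])
  have hntM : Nontrivial ↥U₁ := ⟨x₀, 0, hx₀⟩
  -- U₁ is an irreducible A₁-module
  have MIrr : AIrred A₁ ↥U₁ ρ₁' := by
    refine ⟨hntM, fun W hW => ?_⟩
    have hle : W.map U₁.subtype ≤ U₁ := by
      rintro u ⟨w, hw, rfl⟩
      exact (w : ↥U₁).2
    have hWinv : ∀ a : A₁, ∀ u ∈ W.map U₁.subtype, ρ (a ⊗ₜ[ℂ] (1 : A₂)) u ∈ W.map U₁.subtype := by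
      rintro a u ⟨w, hw, rfl⟩
      exact ⟨ρ₁' a w, hW a w hw, compat a w⟩
    rcases hmin (W.map U₁.subtype) hle hWinv with h | h
    · left
      exact Submodule.map_injective_of_injective U₁.injective_subtype
        (h.trans (Submodule.map_bot U₁.subtype).symm)
    · right
      refine Submodule.map_injective_of_injective U₁.injective_subtype ?_
      rw [Submodule.map_subtype_top]
      exact h
  -- Schur's lemma for U₁
  have schur : ∀ g : ↥U₁ →ₗ[ℂ] ↥U₁, (∀ a x, g (ρ₁' a x) = ρ₁' a (g x)) →
      ∃ c : ℂ, g = c • LinearMap.id := by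
    rcases hyp with hcd | hsch
    · exact fun g hg => schur_of_countable ρ₁' MIrr hcd g hg
    · intro g hg
      refine hsch g (fun a x => ?_)
      have h1 : (⟨ρ (a ⊗ₜ[ℂ] (1 : A₂)) ↑x, hinv a ↑x x.2⟩ : ↥U₁) = ρ₁' a x :=
        Subtype.ext (compat a x).symm
      rw [h1, hg a x, compat]
  set H := Hsub ρ U₁ ρ₁' with hH
  set E := evalE ρ U₁ ρ₁' with hE0
  set ρT := rhoT ρ U₁ ρ₁' with hρT0
  have hρTt := rhoT_tmul ρ U₁ ρ₁'
  have hEtm := evalE_tmul ρ U₁ ρ₁'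
  -- equivariance of E
  have hE : ∀ (z : A₁ ⊗[ℂ] A₂) (t : ↥U₁ ⊗[ℂ] ↥H), E (ρT z t) = ρ z (E t) := by
    intro z
    induction z using TensorProduct.induction_on with
    | zero => intro t; simp
    | tmul a₁ a₂ =>
      intro t
      induction t using TensorProduct.induction_on with
      | zero => simp
      | tmul x f =>
        rw [hρTt, TensorProduct.map_tmul, hEtm, hEtm]
        show (ρ ((1 : A₁) ⊗ₜ[ℂ] a₂)) ((f : ↥U₁ →ₗ[ℂ] U) (ρ₁' a₁ x)) = _
        rw [f.2 a₁ x, ← Module.End.mul_apply, comm_lemma, ← comm_lemma', Module.End.mul_apply,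
          ← Module.End.mul_apply, comm_lemma']
      | add t₁ t₂ h₁ h₂ =>
        rw [map_add E t₁ t₂, map_add (ρT (a₁ ⊗ₜ[ℂ] a₂)) t₁ t₂, map_add E, h₁, h₂]
        exact (map_add (ρ (a₁ ⊗ₜ[ℂ] a₂)) (E t₁) (E t₂)).symm
    | add z₁ z₂ h₁ h₂ =>
      intro t
      rw [map_add, map_add, LinearMap.add_apply, LinearMap.add_apply, map_add, h₁, h₂]
  -- the inclusion is an element of H
  set inclH : ↥H := ⟨U₁.subtype, fun a x => compat a x⟩ with hinclH
  -- E is injective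
  have hEinj : Function.Injective E := by
    set bH := Module.Basis.ofVectorSpace ℂ ↥H with hbH
    set eqv : (↥U₁ ⊗[ℂ] ↥H) ≃ₗ[ℂ] ((Module.Basis.ofVectorSpaceIndex ℂ ↥H) →₀ ↥U₁) :=
      (TensorProduct.congr (LinearEquiv.refl ℂ ↥U₁) bH.repr).trans
        (TensorProduct.finsuppScalarRight ℂ ℂ ↥U₁ _) with heqvdef
    have heqv : ∀ (m : ↥U₁) (i), eqv.symm (Finsupp.single i m) = m ⊗ₜ[ℂ] (bH i) := by
      intro m i
      rw [LinearEquiv.symm_apply_eq]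
      ext j
      simp only [heqvdef, LinearEquiv.trans_apply, TensorProduct.congr_tmul,
        LinearEquiv.refl_apply, Module.Basis.repr_self,
        TensorProduct.finsuppScalarRight_apply_tmul_apply]
      rw [Finsupp.single_apply, Finsupp.single_apply]
      split <;> simp
    set F : ((Module.Basis.ofVectorSpaceIndex ℂ ↥H) →₀ ↥U₁) →ₗ[ℂ] U :=
      E ∘ₗ (eqv.symm : ((Module.Basis.ofVectorSpaceIndex ℂ ↥H) →₀ ↥U₁) →ₗ[ℂ] (↥U₁ ⊗[ℂ] ↥H)) with hF
    have hFsingle : ∀ i m, F (Finsupp.single i m) = ((bH i : ↥H) : ↥U₁ →ₗ[ℂ] U) m := by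
      intro i m
      show E (eqv.symm (Finsupp.single i m)) = _
      rw [heqv]
      exact hEtm m (bH i)
    have hFinj : ∀ l, F l = 0 → l = 0 := by
      intro l hl
      have hrep : F l = ∑ i ∈ l.support, ((bH i : ↥H) : ↥U₁ →ₗ[ℂ] U) (l i) := by
        conv_lhs => rw [← Finsupp.sum_single l]
        rw [map_finsuppSum]
        exact Finset.sum_congr rfl fun i _ => hFsingle i (l i)
      have hzero : ∀ i ∈ l.support, l i = 0 := by
        refine core ρ₁' (fun a => ρ (a ⊗ₜ[ℂ] (1 : A₂))) MIrr schur
          (fun i => ((bH i : ↥H) : ↥U₁ →ₗ[ℂ] U)) (fun i a x => (bH i).2 a x) l.support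
          ?_ (fun i => l i) ?_
        · intro lam hlam i hi
          have h1 : H.subtype (∑ j ∈ l.support, lam j • bH j) = 0 := by
            rw [map_sum]
            simpa only [map_smul, Submodule.subtype_apply] using hlam
          have h2 : (∑ j ∈ l.support, lam j • bH j) = 0 :=
            H.injective_subtype (h1.trans (map_zero H.subtype).symm)
          exact linearIndependent_iff'.mp bH.linearIndependent l.support lam h2 i hi
        · rw [← hrep]; exact hl
      apply Finsupp.ext; intro i
      by_cases hi : i ∈ l.support
      · exact hzero i hi
      · exact Finsupp.notMem_support_iff.mp hi
    intro t t' htt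
    have h1 : F (eqv t) = F (eqv t') := by
      show E (eqv.symm (eqv t)) = E (eqv.symm (eqv t'))
      rw [eqv.symm_apply_apply, eqv.symm_apply_apply]
      exact htt
    have h2 : F (eqv t - eqv t') = 0 := by rw [map_sub, h1, sub_self]
    have h3 : eqv t = eqv t' := by
      have := hFinj _ h2
      rwa [sub_eq_zero] at this
    exact eqv.injective h3
  -- E is surjective
  have hEsurj : Function.Surjective E := by
    have := hirr.1
    rw [← LinearMap.range_eq_top]
    rcases hirr.2 (LinearMap.range E) (fun z u hu => by
      obtain ⟨t, rfl⟩ := hu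
      exact ⟨ρT z t, hE z t⟩) with h | h
    · exfalso
      have hm : (x₀ : U) ∈ LinearMap.range E := ⟨x₀ ⊗ₜ[ℂ] inclH, rfl⟩
      rw [h, Submodule.mem_bot] at hm
      exact hx₀ne hm
    · exact h
  set Φ := (LinearEquiv.ofBijective E ⟨hEinj, hEsurj⟩).symm with hΦdef
  have hEΦ : ∀ u, E (Φ u) = u := fun u =>
    (LinearEquiv.ofBijective E ⟨hEinj, hEsurj⟩).apply_symm_apply u
  -- irreducibility of H as an A₂-module
  have hAIrr₂ : AIrred A₂ ↥H (rho₂ ρ U₁ ρ₁') := by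
    constructor
    · refine ⟨inclH, 0, fun h => hx₀ne ?_⟩
      have h0 : (inclH : ↥U₁ →ₗ[ℂ] U) x₀ = 0 := by rw [h]; rfl
      exact h0
    · intro S hS
      by_cases hSbot : S = ⊥
      · exact Or.inl hSbot
      right
      obtain ⟨f₀, hf₀S, hf₀ne⟩ := (Submodule.ne_bot_iff S).mp hSbot
      set P : Submodule ℂ (↥U₁ ⊗[ℂ] ↥H) :=
        Submodule.span ℂ {t | ∃ (x : ↥U₁) (f : ↥H), f ∈ S ∧ t = x ⊗ₜ[ℂ] f} with hP
      have hPinv : ∀ (z : A₁ ⊗[ℂ] A₂), ∀ t ∈ P, ρT z t ∈ P := by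
        intro z
        induction z using TensorProduct.induction_on with
        | zero => intro t _; rw [map_zero]; exact P.zero_mem
        | tmul a₁ a₂ =>
          intro t ht
          refine Submodule.span_induction ?_ ?_ ?_ ?_ ht
          · rintro u ⟨x, f, hfS, rfl⟩
            rw [hρTt, TensorProduct.map_tmul]
            exact Submodule.subset_span ⟨ρ₁' a₁ x, rho₂ ρ U₁ ρ₁' a₂ f, hS a₂ f hfS, rfl⟩
          · rw [map_zero]; exact P.zero_mem
          · intro u v _ _ hu hv; rw [map_add]; exact P.add_mem hu hv
          · intro c u _ hu; rw [map_smul]; exact P.smul_mem c hu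
        | add z₁ z₂ h₁ h₂ =>
          intro t ht
          rw [map_add, LinearMap.add_apply]
          exact P.add_mem (h₁ t ht) (h₂ t ht)
      rcases hirr.2 (P.map E) (fun z u hu => by
          obtain ⟨t, ht, rfl⟩ := hu
          exact ⟨ρT z t, hPinv z t ht, hE z t⟩) with hTbot | hTtop
      · exfalso
        obtain ⟨x₁, hx₁⟩ : ∃ x : ↥U₁, (f₀ : ↥U₁ →ₗ[ℂ] U) x ≠ 0 := by
          by_contra hno
          push_neg at hno
          exact hf₀ne (Subtype.ext (LinearMap.ext hno))
        apply hx₁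
        have hmem : E (x₁ ⊗ₜ[ℂ] f₀) ∈ P.map E :=
          ⟨x₁ ⊗ₜ[ℂ] f₀, Submodule.subset_span ⟨x₁, f₀, hf₀S, rfl⟩, rfl⟩
        rw [hTbot, Submodule.mem_bot] at hmem
        exact hmem
      · have hPtop : P = ⊤ := by
          refine Submodule.map_injective_of_injective hEinj ?_
          rw [hTtop, Submodule.map_top, LinearMap.range_eq_top.mpr hEsurj]
        obtain ⟨φ, hφ⟩ := LinearMap.exists_leftInverse_of_injective
          (LinearMap.toSpanSingleton ℂ ↥U₁ x₀) (LinearMap.ker_toSpanSingleton ℂ hx₀)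
        have hφx₀ : φ x₀ = 1 := by
          have h1 := LinearMap.ext_iff.mp hφ 1
          simpa [LinearMap.toSpanSingleton_apply] using h1
        set Ψ : (↥U₁ ⊗[ℂ] ↥H) →ₗ[ℂ] ↥H :=
          TensorProduct.lift
            { toFun := fun x =>
                { toFun := fun f => φ x • f
                  map_add' := fun f g => smul_add (φ x) f g
                  map_smul' := fun c f => smul_comm (φ x) c f }
              map_add' := fun x y => LinearMap.ext fun f =>
                show φ (x + y) • f = φ x • f + φ y • f by rw [map_add, add_smul]
              map_smul' := fun c x => LinearMap.ext fun f =>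
                show φ (c • x) • f = c • (φ x • f) by
                  rw [map_smul, smul_eq_mul, mul_smul] } with hΨ
        have hΨP : ∀ t ∈ P, Ψ t ∈ S := by
          intro t ht
          refine Submodule.span_induction ?_ ?_ ?_ ?_ ht
          · rintro u ⟨x, f, hfS, rfl⟩
            exact S.smul_mem _ hfS
          · rw [map_zero]; exact S.zero_mem
          · intro u v _ _ hu hv; rw [map_add]; exact S.add_mem hu hv
          · intro c u _ hu; rw [map_smul]; exact S.smul_mem c hu
        rw [Submodule.eq_top_iff']
        intro g
        have hg : Ψ (x₀ ⊗ₜ[ℂ] g) = g := by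
          show φ x₀ • g = g
          rw [hφx₀, one_smul]
        rw [← hg]
        exact hΨP _ (hPtop ▸ Submodule.mem_top)
  refine ⟨ModuleCat.of ℂ ↥H, rho₂ ρ U₁ ρ₁', hAIrr₂, ρT, hρTt, Φ, ?_⟩
  intro z u
  apply hEinj
  exact (hEΦ (ρ z u)).trans ((hE z (Φ u)).trans (congrArg (⇑(ρ z)) (hEΦ u))).symm

end Twisted
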